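/- (Unisolvence of the Morley element) Let K be a non-degenerate triangle with vertices a₁, a₂, a₃ and edges e₁, e₂, e₃. If p is a polynomial of degree at most 2 on ℝ² such that p(aᵢ) = 0 for i = 1,2,3 and the integral of the normal derivative ∂p/∂ν over each edge eⱼ vanishes, then p ≡ 0. -/

import Mathlib

set_option maxHeartbeats 1000000

lemma collinear_of_det' (v₁ v₂ v₃ : ℝ × ℝ)
    (h : (v₂.1 - v₁.1) * (v₃.2 - v₁.2) - (v₂.2 - v₁.2) * (v₃.1 - v₁.1) = 0) :
    Collinear ℝ ({v₁, v₂, v₃} : Set (ℝ × ℝ)) := by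
  by_cases hu : v₂ = v₁
  · have hs : ({v₁, v₂, v₃} : Set (ℝ × ℝ)) = {v₁, v₃} := by
      rw [hu, Set.insert_idem]
    rw [hs]; exact collinear_pair ℝ v₁ v₃
  · rw [collinear_iff_of_mem (Set.mem_insert v₁ _)]
    refine ⟨v₂ - v₁, fun q hq => ?_⟩
    simp only [Set.mem_insert_iff, Set.mem_singleton_iff] at hq
    rcases hq with rfl | rfl | rfl
    · exact ⟨0, by simp⟩
    · exact ⟨1, by simp⟩
    · have hne : v₂.1 - v₁.1 ≠ 0 ∨ v₂.2 - v₁.2 ≠ 0 := by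
        by_contra hc
        push_neg at hc
        exact hu (Prod.ext (by linarith [hc.1]) (by linarith [hc.2]))
      rcases hne with h1 | h1
      · refine ⟨(q.1 - v₁.1) / (v₂.1 - v₁.1), ?_⟩
        have e1 : q.1 = (q.1 - v₁.1) / (v₂.1 - v₁.1) * (v₂.1 - v₁.1) + v₁.1 := by
          field_simp; ring
        have e2 : q.2 = (q.1 - v₁.1) / (v₂.1 - v₁.1) * (v₂.2 - v₁.2) + v₁.2 := by
          field_simp; nlinarith [h]
        exact Prod.ext (by simpa using e1) (by simpa using e2)
      · refine ⟨(q.2 - v₁.2) / (v₂.2 - v₁.2), ?_⟩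
        have e1 : q.1 = (q.2 - v₁.2) / (v₂.2 - v₁.2) * (v₂.1 - v₁.1) + v₁.1 := by
          field_simp; nlinarith [h]
        have e2 : q.2 = (q.2 - v₁.2) / (v₂.2 - v₁.2) * (v₂.2 - v₁.2) + v₁.2 := by
          field_simp; ring
        exact Prod.ext (by simpa using e1) (by simpa using e2)

lemma sq_add_sq_zero' (x y : ℝ) (h : x^2 + y^2 = 0) : x = 0 ∧ y = 0 := by
  constructor <;> nlinarith [sq_nonneg x, sq_nonneg y]

lemma lam_ne' (e1 e2 n1 n2 : ℝ) (hd : e1*n1 + e2*n2 = 0) (hn : n1^2 + n2^2 = 1)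
    (hE : e1^2 + e2^2 ≠ 0) : e2*n1 - e1*n2 ≠ 0 := by
  intro h0
  apply hE
  have hsq : (e2*n1 - e1*n2)^2 = e1^2 + e2^2 := by
    linear_combination (e1^2 + e2^2) * hn - (e1*n1 + e2*n2) * hd
  rw [h0] at hsq
  linarith [hsq]

/-- Unisolvence of the Morley element: a quadratic polynomial vanishing at the
three vertices of a nondegenerate triangle and with vanishing integral of the
normal derivative over each edge is identically zero. -/
theorem stmt_2
    (v₁ v₂ v₃ : ℝ × ℝ)
    (hK : ¬ Collinear ℝ ({v₁, v₂, v₃} : Set (ℝ × ℝ)))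
    (ν₁ ν₂ ν₃ : ℝ × ℝ)
    -- ν₁ is a unit normal to the edge [v₂, v₃], etc.
    (hν₁ : (v₃ - v₂).1 * ν₁.1 + (v₃ - v₂).2 * ν₁.2 = 0) (hν₁n : ν₁.1 ^ 2 + ν₁.2 ^ 2 = 1)
    (hν₂ : (v₁ - v₃).1 * ν₂.1 + (v₁ - v₃).2 * ν₂.2 = 0) (hν₂n : ν₂.1 ^ 2 + ν₂.2 ^ 2 = 1)
    (hν₃ : (v₂ - v₁).1 * ν₃.1 + (v₂ - v₁).2 * ν₃.2 = 0) (hν₃n : ν₃.1 ^ 2 + ν₃.2 ^ 2 = 1)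
    (a₀ a₁ a₂ a₃ a₄ a₅ : ℝ) (p : ℝ × ℝ → ℝ)
    (hp : ∀ z : ℝ × ℝ,
      p z = a₀ + a₁ * z.1 + a₂ * z.2 + a₃ * z.1 * z.2 + a₄ * z.1 ^ 2 + a₅ * z.2 ^ 2)
    (hval : p v₁ = 0 ∧ p v₂ = 0 ∧ p v₃ = 0)
    (hedge₁ : ∫ t in (0:ℝ)..1, fderiv ℝ p (v₂ + t • (v₃ - v₂)) ν₁ = 0)
    (hedge₂ : ∫ t in (0:ℝ)..1, fderiv ℝ p (v₃ + t • (v₁ - v₃)) ν₂ = 0)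
    (hedge₃ : ∫ t in (0:ℝ)..1, fderiv ℝ p (v₁ + t • (v₂ - v₁)) ν₃ = 0) :
    ∀ z : ℝ × ℝ, p z = 0 := by
  obtain ⟨hP1, hP2, hP3⟩ := hval
  rw [hp] at hP1 hP2 hP3
  simp only [Prod.fst_sub, Prod.snd_sub] at hν₁ hν₂ hν₃
  -- the function in a convenient form
  have hp' : p = fun z : ℝ × ℝ =>
      a₀ + a₁*z.1 + a₂*z.2 + a₃*(z.1*z.2) + a₄*(z.1*z.1) + a₅*(z.2*z.2) :=
    funext fun z => by rw [hp z]; ring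
  -- derivative formula
  have hder : ∀ z w : ℝ × ℝ, fderiv ℝ p z w =
      (a₁ + a₃*z.2 + 2*a₄*z.1)*w.1 + (a₂ + a₃*z.1 + 2*a₅*z.2)*w.2 := by
    intro z w
    have h1 : HasFDerivAt (fun z : ℝ × ℝ => z.1) (ContinuousLinearMap.fst ℝ ℝ ℝ) z :=
      hasFDerivAt_fst
    have h2 : HasFDerivAt (fun z : ℝ × ℝ => z.2) (ContinuousLinearMap.snd ℝ ℝ ℝ) z :=
      hasFDerivAt_snd
    have h := (((((hasFDerivAt_const a₀ z).add (h1.const_mul a₁)).add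
        (h2.const_mul a₂)).add ((h1.mul h2).const_mul a₃)).add
        ((h1.mul h1).const_mul a₄)).add ((h2.mul h2).const_mul a₅)
    have hD : HasFDerivAt p
        (((a₁ + a₃*z.2 + 2*a₄*z.1) • ContinuousLinearMap.fst ℝ ℝ ℝ) +
         ((a₂ + a₃*z.1 + 2*a₅*z.2) • ContinuousLinearMap.snd ℝ ℝ ℝ)) z := by
      rw [hp']
      exact h.congr_fderiv (by ext w <;> simp <;> ring)
    rw [hD.fderiv]
    simp
  -- integral of an affine function
  have hkey : ∀ C D : ℝ, (∫ t in (0:ℝ)..1, (C + D * t)) = C + D/2 := by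
    intro C D
    rw [intervalIntegral.integral_add (intervalIntegrable_const)
      (((by fun_prop : Continuous fun t : ℝ => D * t)).intervalIntegrable 0 1),
      intervalIntegral.integral_const_mul (a := (0:ℝ)) (b := (1:ℝ)) D (fun t => t), integral_id]
    simp
    ring
  -- edge integral formula
  have hedge : ∀ w e νv : ℝ × ℝ, (∫ t in (0:ℝ)..1, fderiv ℝ p (w + t • e) νv) =
      ((a₁ + a₃*w.2 + 2*a₄*w.1)*νv.1 + (a₂ + a₃*w.1 + 2*a₅*w.2)*νv.2) +
      ((a₃*e.2 + 2*a₄*e.1)*νv.1 + (a₃*e.1 + 2*a₅*e.2)*νv.2)/2 := by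
    intro w e νv
    have hfun : (fun t : ℝ => fderiv ℝ p (w + t • e) νv) = fun t : ℝ =>
        ((a₁ + a₃*w.2 + 2*a₄*w.1)*νv.1 + (a₂ + a₃*w.1 + 2*a₅*w.2)*νv.2) +
        ((a₃*e.2 + 2*a₄*e.1)*νv.1 + (a₃*e.1 + 2*a₅*e.2)*νv.2) * t := by
      funext t
      rw [hder]
      simp [Prod.fst_add, Prod.snd_add, Prod.smul_fst, Prod.smul_snd, smul_eq_mul]
      ring
    rw [hfun, hkey]
  rw [hedge] at hedge₁ hedge₂ hedge₃
  simp only [Prod.fst_sub, Prod.snd_sub, Prod.fst_add, Prod.snd_add] at hedge₁ hedge₂ hedge₃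
  -- determinant nonzero
  have hΔ : (v₂.1 - v₁.1) * (v₃.2 - v₁.2) - (v₂.2 - v₁.2) * (v₃.1 - v₁.1) ≠ 0 :=
    fun h => hK (collinear_of_det' v₁ v₂ v₃ h)
  -- edges nonzero
  have hE1 : (v₃.1 - v₂.1)^2 + (v₃.2 - v₂.2)^2 ≠ 0 := by
    intro h0
    obtain ⟨h1, h2⟩ := sq_add_sq_zero' _ _ h0
    exact hΔ (by linear_combination (-(v₂.2 - v₁.2)) * h1 + (v₂.1 - v₁.1) * h2)
  have hE2 : (v₁.1 - v₃.1)^2 + (v₁.2 - v₃.2)^2 ≠ 0 := by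
    intro h0
    obtain ⟨h1, h2⟩ := sq_add_sq_zero' _ _ h0
    exact hΔ (by linear_combination (v₂.2 - v₁.2) * h1 - (v₂.1 - v₁.1) * h2)
  have hE3 : (v₂.1 - v₁.1)^2 + (v₂.2 - v₁.2)^2 ≠ 0 := by
    intro h0
    obtain ⟨h1, h2⟩ := sq_add_sq_zero' _ _ h0
    exact hΔ (by linear_combination (v₃.2 - v₁.2) * h1 - (v₃.1 - v₁.1) * h2)
  -- lambdas nonzero
  have hlam1 : (v₃.2 - v₂.2) * ν₁.1 - (v₃.1 - v₂.1) * ν₁.2 ≠ 0 :=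
    lam_ne' _ _ _ _ hν₁ hν₁n hE1
  have hlam2 : (v₁.2 - v₃.2) * ν₂.1 - (v₁.1 - v₃.1) * ν₂.2 ≠ 0 :=
    lam_ne' _ _ _ _ hν₂ hν₂n hE2
  have hlam3 : (v₂.2 - v₁.2) * ν₃.1 - (v₂.1 - v₁.1) * ν₃.2 ≠ 0 :=
    lam_ne' _ _ _ _ hν₃ hν₃n hE3
  -- tangential equations
  have hT₁ : (a₁ + a₃*((v₂.2+v₃.2)/2) + 2*a₄*((v₂.1+v₃.1)/2)) * (v₃.1-v₂.1)
      + (a₂ + a₃*((v₂.1+v₃.1)/2) + 2*a₅*((v₂.2+v₃.2)/2)) * (v₃.2-v₂.2) = 0 := by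
    linear_combination hP3 - hP2
  have hT₂ : (a₁ + a₃*((v₃.2+v₁.2)/2) + 2*a₄*((v₃.1+v₁.1)/2)) * (v₁.1-v₃.1)
      + (a₂ + a₃*((v₃.1+v₁.1)/2) + 2*a₅*((v₃.2+v₁.2)/2)) * (v₁.2-v₃.2) = 0 := by
    linear_combination hP1 - hP3
  have hT₃ : (a₁ + a₃*((v₁.2+v₂.2)/2) + 2*a₄*((v₁.1+v₂.1)/2)) * (v₂.1-v₁.1)
      + (a₂ + a₃*((v₁.1+v₂.1)/2) + 2*a₅*((v₁.2+v₂.2)/2)) * (v₂.2-v₁.2) = 0 := by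
    linear_combination hP2 - hP1
  -- gradient components at midpoints
  have g11 : a₁ + a₃*((v₂.2+v₃.2)/2) + 2*a₄*((v₂.1+v₃.1)/2) = 0 := by
    have h := mul_eq_zero.1 (show (a₁ + a₃*((v₂.2+v₃.2)/2) + 2*a₄*((v₂.1+v₃.1)/2))
        * ((v₃.2 - v₂.2) * ν₁.1 - (v₃.1 - v₂.1) * ν₁.2) = 0 by
      linear_combination (v₃.2 - v₂.2) * hedge₁ - ν₁.2 * hT₁)
    exact h.resolve_right hlam1
  have g21 : a₂ + a₃*((v₂.1+v₃.1)/2) + 2*a₅*((v₂.2+v₃.2)/2) = 0 := by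
    have h := mul_eq_zero.1 (show (a₂ + a₃*((v₂.1+v₃.1)/2) + 2*a₅*((v₂.2+v₃.2)/2))
        * ((v₃.2 - v₂.2) * ν₁.1 - (v₃.1 - v₂.1) * ν₁.2) = 0 by
      linear_combination ν₁.1 * hT₁ - (v₃.1 - v₂.1) * hedge₁)
    exact h.resolve_right hlam1
  have g12 : a₁ + a₃*((v₃.2+v₁.2)/2) + 2*a₄*((v₃.1+v₁.1)/2) = 0 := by
    have h := mul_eq_zero.1 (show (a₁ + a₃*((v₃.2+v₁.2)/2) + 2*a₄*((v₃.1+v₁.1)/2))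
        * ((v₁.2 - v₃.2) * ν₂.1 - (v₁.1 - v₃.1) * ν₂.2) = 0 by
      linear_combination (v₁.2 - v₃.2) * hedge₂ - ν₂.2 * hT₂)
    exact h.resolve_right hlam2
  have g22 : a₂ + a₃*((v₃.1+v₁.1)/2) + 2*a₅*((v₃.2+v₁.2)/2) = 0 := by
    have h := mul_eq_zero.1 (show (a₂ + a₃*((v₃.1+v₁.1)/2) + 2*a₅*((v₃.2+v₁.2)/2))
        * ((v₁.2 - v₃.2) * ν₂.1 - (v₁.1 - v₃.1) * ν₂.2) = 0 by
      linear_combination ν₂.1 * hT₂ - (v₁.1 - v₃.1) * hedge₂)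
    exact h.resolve_right hlam2
  have g13 : a₁ + a₃*((v₁.2+v₂.2)/2) + 2*a₄*((v₁.1+v₂.1)/2) = 0 := by
    have h := mul_eq_zero.1 (show (a₁ + a₃*((v₁.2+v₂.2)/2) + 2*a₄*((v₁.1+v₂.1)/2))
        * ((v₂.2 - v₁.2) * ν₃.1 - (v₂.1 - v₁.1) * ν₃.2) = 0 by
      linear_combination (v₂.2 - v₁.2) * hedge₃ - ν₃.2 * hT₃)
    exact h.resolve_right hlam3
  have g23 : a₂ + a₃*((v₁.1+v₂.1)/2) + 2*a₅*((v₁.2+v₂.2)/2) = 0 := by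
    have h := mul_eq_zero.1 (show (a₂ + a₃*((v₁.1+v₂.1)/2) + 2*a₅*((v₁.2+v₂.2)/2))
        * ((v₂.2 - v₁.2) * ν₃.1 - (v₂.1 - v₁.1) * ν₃.2) = 0 by
      linear_combination ν₃.1 * hT₃ - (v₂.1 - v₁.1) * hedge₃)
    exact h.resolve_right hlam3
  -- solve the linear system
  have ha₄ : a₄ = 0 := by
    have h := mul_eq_zero.1 (show a₄ *
        ((v₂.1 - v₁.1) * (v₃.2 - v₁.2) - (v₂.2 - v₁.2) * (v₃.1 - v₁.1)) = 0 by
      linear_combination ((v₃.2 - v₁.2) - (v₂.2 - v₁.2)) * g11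
        - (v₃.2 - v₁.2) * g12 + (v₂.2 - v₁.2) * g13)
    exact h.resolve_right hΔ
  have ha₃ : a₃ = 0 := by
    have h := mul_eq_zero.1 (show a₃ *
        ((v₂.1 - v₁.1) * (v₃.2 - v₁.2) - (v₂.2 - v₁.2) * (v₃.1 - v₁.1)) = 0 by
      linear_combination (2*(v₂.1 - v₁.1) - 2*(v₃.1 - v₁.1)) * g11
        + 2*(v₃.1 - v₁.1) * g12 - 2*(v₂.1 - v₁.1) * g13)
    exact h.resolve_right hΔ
  have ha₅ : a₅ = 0 := by
    have h := mul_eq_zero.1 (show a₅ *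
        ((v₂.1 - v₁.1) * (v₃.2 - v₁.2) - (v₂.2 - v₁.2) * (v₃.1 - v₁.1)) = 0 by
      linear_combination ((v₂.1 - v₁.1) - (v₃.1 - v₁.1)) * g21
        + (v₃.1 - v₁.1) * g22 - (v₂.1 - v₁.1) * g23)
    exact h.resolve_right hΔ
  subst ha₃ ha₄ ha₅
  have ha₁ : a₁ = 0 := by linarith [g11]
  have ha₂ : a₂ = 0 := by linarith [g21]
  subst ha₁ ha₂
  have ha₀ : a₀ = 0 := by linarith [hP1]
  subst ha₀
  intro z
  rw [hp]
  ring
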